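/- There is an absolute constant c > 0 with the following property. Suppose A is a finite set of integers that tiles ℤ, with diameter D ≥ 3, and suppose A ⊕ T = ℤ is a tiling whose translation set T has least period M, where M has the same set of prime factors as |A|. Then M ≤ exp(c·(log D)²/(log log D)). -/

import Mathlib

open Finset


lemma fact_le_prod (S : Finset ℕ) (h2 : ∀ x ∈ S, 2 ≤ x) : S.card.factorial ≤ ∏ x ∈ S, x := by
  induction S using Finset.strongInduction with
  | _ S ih =>
    rcases S.eq_empty_or_nonempty with rfl | hS
    · simp
    · have hm : S.max' hS ∈ S := S.max'_mem hS
      have hsub : S ⊆ Finset.Icc 2 (S.max' hS) := by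
        intro x hx
        exact Finset.mem_Icc.2 ⟨h2 x hx, S.le_max' x hx⟩
      have hcard : S.card ≤ S.max' hS - 1 := by
        have := Finset.card_le_card hsub
        rwa [Nat.card_Icc] at this
      have hmax : S.card + 1 ≤ S.max' hS := by
        have h2m := h2 _ hm
        omega
      have herase := ih (S.erase (S.max' hS)) (Finset.erase_ssubset hm)
        (fun x hx => h2 x (Finset.mem_of_mem_erase hx))
      have hcarde : (S.erase (S.max' hS)).card = S.card - 1 := Finset.card_erase_of_mem hm
      have hprod : ∏ x ∈ S, x = S.max' hS * ∏ x ∈ S.erase (S.max' hS), x :=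
        (Finset.mul_prod_erase S id hm).symm
      rw [hprod]
      have h1 : S.card.factorial = S.card * (S.card - 1).factorial := by
        cases' Nat.exists_eq_succ_of_ne_zero (Finset.card_ne_zero_of_mem hm) with n hn
        rw [hn]; simp [Nat.factorial_succ]
      rw [h1]
      calc S.card * (S.card - 1).factorial ≤ S.max' hS * ∏ x ∈ S.erase (S.max' hS), x := by
            apply Nat.mul_le_mul (by omega)
            rw [hcarde] at herase; exact herase

lemma pow_half_le_fact (d : ℕ) : (d / 2 + 1) ^ (d / 2) ≤ d.factorial := by
  have h1 : d.factorial = ∏ i ∈ Finset.range d, (i + 1) := (Finset.prod_range_add_one_eq_factorial d).symm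
  rw [h1]
  have h2 : ∏ i ∈ Finset.Ico (d / 2) d, (i + 1) ≤ ∏ i ∈ Finset.range d, (i + 1) := by
    apply Finset.prod_le_prod_of_subset_of_one_le'
    · intro x hx; rw [Finset.mem_range]; exact (Finset.mem_Ico.1 hx).2
    · intro i _ _; omega
  refine le_trans ?_ h2
  have h3 : (d / 2 + 1) ^ (d / 2) ≤ (d / 2 + 1) ^ (d - d / 2) :=
    Nat.pow_le_pow_right (by omega) (by omega)
  refine le_trans h3 ?_
  have h4 : (d / 2 + 1) ^ (d - d / 2) = ∏ _i ∈ Finset.Ico (d / 2) d, (d / 2 + 1) := by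
    rw [Finset.prod_const, Nat.card_Ico]
  rw [h4]
  apply Finset.prod_le_prod' <;> intro i hi
  have := (Finset.mem_Ico.1 hi).1; omega


lemma key_real (d : ℕ) (L : ℝ) (hL : 1 < L)
    (hfac : (d.factorial : ℝ) ≤ Real.exp (2 * L)) :
    (d : ℝ) * Real.log L ≤ 16 * L := by
  set ℓ := Real.log L with hℓ
  have hL0 : (0:ℝ) < L := by linarith
  have hℓ0 : 0 < ℓ := Real.log_pos hL
  have hℓL : ℓ < L := lt_of_le_of_lt (Real.log_le_sub_one_of_pos hL0) (by linarith)
  by_contra hcon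
  push_neg at hcon
  have hd16 : (16 : ℝ) < d := by
    by_contra hd
    push_neg at hd
    have : (d:ℝ) * ℓ ≤ 16 * ℓ := by nlinarith
    nlinarith
  set k := d / 2 with hk
  have hkd : (d:ℝ) ≤ 2 * k + 1 := by
    have : d ≤ 2 * k + 1 := by omega
    exact_mod_cast this
  have hk8 : (8:ℝ) ≤ (k:ℝ) := by
    have : 8 ≤ k := by
      have h17 : (16:ℝ) < (d:ℝ) := hd16
      have : 16 < d := by exact_mod_cast h17
      omega
    exact_mod_cast this
  -- k * log (k+1) ≤ 2L
  have hfk : ((k + 1 : ℕ) : ℝ) ^ k ≤ Real.exp (2 * L) := by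
    calc ((k + 1 : ℕ) : ℝ) ^ k ≤ (d.factorial : ℝ) := by
          exact_mod_cast pow_half_le_fact d
      _ ≤ _ := hfac
  have hklog : (k:ℝ) * Real.log (k + 1) ≤ 2 * L := by
    have h1 : Real.log (((k + 1 : ℕ) : ℝ) ^ k) ≤ 2 * L := by
      calc Real.log (((k + 1 : ℕ) : ℝ) ^ k) ≤ Real.log (Real.exp (2 * L)) :=
            Real.log_le_log (by positivity) hfk
        _ = 2 * L := Real.log_exp _
    rwa [Real.log_pow, Nat.cast_add, Nat.cast_one] at h1
  -- L ≥ ℓ * exp(ℓ/2)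
  have hexp : ℓ ≤ Real.exp (ℓ / 2) := by
    have h1 : ℓ / 4 + 1 ≤ Real.exp (ℓ / 4) := Real.add_one_le_exp (ℓ / 4)
    have h2 : Real.exp (ℓ / 2) = Real.exp (ℓ / 4) * Real.exp (ℓ / 4) := by
      rw [← Real.exp_add]; ring_nf
    nlinarith [Real.exp_pos (ℓ/4), sq_nonneg (ℓ/4 - 1)]
  have hLexp : ℓ * Real.exp (ℓ / 2) ≤ L := by
    have : Real.exp ℓ = L := Real.exp_log hL0
    have h2 : Real.exp ℓ = Real.exp (ℓ / 2) * Real.exp (ℓ / 2) := by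
      rw [← Real.exp_add]; ring_nf
    nlinarith [Real.exp_pos (ℓ/2)]
  -- k+1 ≥ exp(ℓ/2), so log(k+1) ≥ ℓ/2
  have hk1 : Real.exp (ℓ / 2) ≤ (k:ℝ) + 1 := by
    have hd2 : 16 * L < (2 * (k:ℝ) + 1) * ℓ := lt_of_lt_of_le hcon (by nlinarith)
    nlinarith [Real.exp_pos (ℓ/2)]
  have hlogk : ℓ / 2 ≤ Real.log ((k:ℝ) + 1) := by
    rw [Real.le_log_iff_exp_le (by positivity)]
    exact hk1
  have : (k:ℝ) * (ℓ / 2) ≤ 2 * L := le_trans (by nlinarith) hklog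
  -- d ≤ 3k, so dℓ ≤ 3kℓ ≤ 12 L < 16 L, contradiction
  have hd3k : (d:ℝ) ≤ 3 * k := by nlinarith
  nlinarith

open Finset

lemma per_z (T : Set ℤ) (M : ℕ) (hper : ∀ t : ℤ, t ∈ T ↔ t + M ∈ T) :
    ∀ (j : ℤ) (t : ℤ), t ∈ T ↔ t + j * M ∈ T := by
  intro j
  induction j using Int.induction_on with
  | zero => simp
  | succ i ih =>
    intro t
    have h1 : t + ((i : ℤ) + 1) * M = (t + i * M) + M := by ring
    rw [h1, ← hper]
    exact ih t
  | pred i ih =>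
    intro t
    have h1 : t + (-(i : ℤ) - 1) * M + M = t + (-(i:ℤ)) * M := by ring
    rw [ih t, ← h1, ← hper]

lemma geom_zero {M : ℕ} (ζ : ℂ) (hζM : ζ ^ M = 1) (hζ1 : ζ ≠ 1) :
    ∑ r ∈ Finset.Ico (0 : ℤ) (M : ℤ), ζ ^ r = 0 := by
  rcases Nat.eq_zero_or_pos M with h0 | h0
  · subst h0; simp
  have hζ0 : ζ ≠ 0 := by
    intro h; rw [h, zero_pow h0.ne'] at hζM; exact zero_ne_one hζM
  have himg : Finset.Ico (0 : ℤ) (M : ℤ) = (Finset.range M).image (Nat.cast : ℕ → ℤ) := by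
    ext x
    simp only [Finset.mem_Ico, Finset.mem_image, Finset.mem_range]
    constructor
    · rintro ⟨h1, h2⟩
      exact ⟨x.toNat, by omega, by omega⟩
    · rintro ⟨n, hn, rfl⟩
      exact ⟨by positivity, by exact_mod_cast hn⟩
  rw [himg, Finset.sum_image (by intro a _ b _ h; exact_mod_cast h)]
  have h1 : ∑ n ∈ Finset.range M, ζ ^ (n : ℤ) = ∑ n ∈ Finset.range M, ζ ^ n := by
    apply Finset.sum_congr rfl; intro n _; exact zpow_natCast ζ n
  rw [h1]
  have h2 := geom_sum_mul ζ M
  rw [hζM, sub_self] at h2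
  rcases mul_eq_zero.1 h2 with h | h
  · exact h
  · exact absurd (sub_eq_zero.1 h) hζ1

lemma tiling_prod_eq_zero (A : Finset ℤ) (T : Set ℤ) [DecidablePred (· ∈ T)] (M : ℕ) (hM : 0 < M)
    (htile : ∀ n : ℤ, ∃! at_ : ℤ × ℤ, at_.1 ∈ A ∧ at_.2 ∈ T ∧ at_.1 + at_.2 = n)
    (hper : ∀ t : ℤ, t ∈ T ↔ t + M ∈ T) (ζ : ℂ) (hζM : ζ ^ M = 1) (hζ1 : ζ ≠ 1) :
    (∑ a ∈ A, ζ ^ a) * (∑ t ∈ (Finset.Ico (0 : ℤ) (M : ℤ)).filter (· ∈ T), ζ ^ t) = 0 := by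
  have hζ0 : ζ ≠ 0 := by
    intro h; rw [h, zero_pow hM.ne'] at hζM; exact zero_ne_one hζM
  set Tf := (Finset.Ico (0 : ℤ) (M : ℤ)).filter (· ∈ T) with hTf
  have hMz : (0:ℤ) < (M:ℤ) := by exact_mod_cast hM
  -- rewrite product as double sum
  rw [Finset.sum_mul_sum]
  have hmain : ∑ a ∈ A, ∑ t ∈ Tf, ζ ^ a * ζ ^ t = ∑ r ∈ Finset.Ico (0 : ℤ) (M : ℤ), ζ ^ r := by
    rw [← Finset.sum_product']
    apply Finset.sum_bij (fun (x : ℤ × ℤ) _ => (x.1 + x.2) % (M : ℤ))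
    · intro x hx
      simp only [Finset.mem_Ico]
      exact ⟨Int.emod_nonneg _ hMz.ne', Int.emod_lt_of_pos _ hMz⟩
    · -- injective
      intro x hx y hy hxy
      simp only [Finset.mem_product, hTf, Finset.mem_filter, Finset.mem_Ico] at hx hy
      obtain ⟨hxA, ⟨hx0, hxM⟩, hxT⟩ := hx
      obtain ⟨hyA, ⟨hy0, hyM⟩, hyT⟩ := hy
      have hdvd : (M:ℤ) ∣ (x.1 + x.2) - (y.1 + y.2) := Int.ModEq.dvd (hxy.symm)
      obtain ⟨j, hj⟩ := hdvd
      have hyT' : y.2 + j * M ∈ T := (per_z T M hper j y.2).1 hyT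
      have huniq := htile (x.1 + x.2)
      obtain ⟨w, hw, hwu⟩ := huniq
      have h1 : (x.1, x.2) = w := hwu _ ⟨hxA, hxT, rfl⟩
      have h2 : (y.1, y.2 + j * M) = w := hwu _ ⟨hyA, hyT', by dsimp; linarith [hj]⟩
      have h12 := h1.trans h2.symm
      have h3 : x.1 = y.1 ∧ x.2 = y.2 + j * M := Prod.mk.inj h12
      have hj0 : j = 0 := by nlinarith [h3.2]
      ext
      · exact h3.1
      · rw [h3.2, hj0]; ring
    · -- surjective
      intro r hr
      simp only [Finset.mem_Ico] at hr
      obtain ⟨w, hw, _⟩ := htile r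
      obtain ⟨hwA, hwT, hwsum⟩ := hw
      have ht0 : w.2 % M ∈ T := by
        have : w.2 % M = w.2 + (-(w.2 / M)) * M := by
          rw [Int.emod_def]; ring
        rw [this]
        exact (per_z T M hper _ w.2).1 hwT
      refine ⟨(w.1, w.2 % M), ?_, ?_⟩
      · simp only [Finset.mem_product, hTf, Finset.mem_filter, Finset.mem_Ico]
        exact ⟨hwA, ⟨Int.emod_nonneg _ hMz.ne', Int.emod_lt_of_pos _ hMz⟩, ht0⟩
      · dsimp only
        rw [Int.add_emod w.1 (w.2 % M), Int.emod_emod_of_dvd w.2 dvd_rfl, ← Int.add_emod,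
          hwsum, Int.emod_eq_of_lt hr.1 hr.2]
    · -- values
      intro x hx
      rw [← zpow_add₀ hζ0]
      have hgen : ∀ n : ℤ, ζ ^ n = ζ ^ (n % M) := by
        intro n
        conv_lhs => rw [← Int.mul_ediv_add_emod n M]
        rw [zpow_add₀ hζ0, zpow_mul, zpow_natCast, hζM, one_zpow, one_mul]
      exact hgen _
  rw [hmain]
  exact geom_zero ζ hζM hζ1

open Finset


lemma shift_period (T : Set ℤ) [DecidablePred (· ∈ T)] (M p : ℕ) (hM : 0 < M) (hpM : p ∣ M)
    (hp1 : 1 < p) (hper : ∀ t : ℤ, t ∈ T ↔ t + M ∈ T) (ω : ℂ) (hω : IsPrimitiveRoot ω M)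
    (hvan : ∀ k, k < M → ¬ p ∣ k →
      ∑ t ∈ (Finset.Ico (0 : ℤ) (M : ℤ)).filter (· ∈ T), (ω ^ k) ^ t = 0) :
    ∀ t : ℤ, t ∈ T ↔ t + ((M / p : ℕ) : ℤ) ∈ T := by
  have hω0 : ω ≠ 0 := hω.ne_zero hM.ne'
  set Tf := (Finset.Ico (0 : ℤ) (M : ℤ)).filter (· ∈ T) with hTf
  have hMz : (0:ℤ) < (M:ℤ) := by exact_mod_cast hM
  set cnt : ℤ → ℕ := fun x => (Tf.filter (fun t => (M:ℤ) ∣ t - x)).card with hcnt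
  have hcomm : ∀ (k : ℕ) (n : ℤ), (ω ^ k) ^ n = (ω ^ n) ^ k := by
    intro k n
    rw [← zpow_natCast ω k, ← zpow_mul, mul_comm, zpow_mul, zpow_natCast]
  -- Claim A
  have claimA : ∀ x : ℤ,
      ∑ k ∈ Finset.range M, (ω ^ k) ^ (-x) * ∑ t ∈ Tf, (ω ^ k) ^ t = (M : ℂ) * cnt x := by
    intro x
    have h1 : ∀ k ∈ Finset.range M, (ω ^ k) ^ (-x) * ∑ t ∈ Tf, (ω ^ k) ^ t
        = ∑ t ∈ Tf, (ω ^ (t - x)) ^ k := by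
      intro k _
      rw [Finset.mul_sum]
      apply Finset.sum_congr rfl
      intro t _
      rw [← zpow_add₀ (pow_ne_zero k hω0), ← hcomm]
      congr 1
      ring
    rw [Finset.sum_congr rfl h1, Finset.sum_comm]
    have h2 : ∀ t ∈ Tf, ∑ k ∈ Finset.range M, (ω ^ (t - x)) ^ k
        = if (M:ℤ) ∣ t - x then (M : ℂ) else 0 := by
      intro t _
      by_cases hdvd : (M:ℤ) ∣ t - x
      · rw [if_pos hdvd]
        have : ω ^ (t - x) = 1 := (hω.zpow_eq_one_iff_dvd _).2 hdvd
        simp [this]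
      · rw [if_neg hdvd]
        have hne1 : ω ^ (t - x) ≠ 1 := fun h => hdvd ((hω.zpow_eq_one_iff_dvd _).1 h)
        have hM1 : (ω ^ (t - x)) ^ M = 1 := by
          rw [← zpow_natCast (ω ^ (t-x)) M, ← zpow_mul, mul_comm, zpow_mul, zpow_natCast,
            hω.pow_eq_one, one_zpow]
        have h3 := geom_sum_mul (ω ^ (t - x)) M
        rw [hM1, sub_self] at h3
        rcases mul_eq_zero.1 h3 with h | h
        · exact h
        · exact absurd (sub_eq_zero.1 h) hne1
    rw [Finset.sum_congr rfl h2, Finset.sum_ite, Finset.sum_const, Finset.sum_const_zero,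
      add_zero, nsmul_eq_mul, mul_comm]
  -- Claim B
  have claimB : ∀ x : ℤ, cnt (x + ((M / p : ℕ) : ℤ)) = cnt x := by
    intro x
    have hsum : ∑ k ∈ Finset.range M, (ω ^ k) ^ (-(x + ((M / p : ℕ) : ℤ))) * ∑ t ∈ Tf, (ω ^ k) ^ t
        = ∑ k ∈ Finset.range M, (ω ^ k) ^ (-x) * ∑ t ∈ Tf, (ω ^ k) ^ t := by
      apply Finset.sum_congr rfl
      intro k hk
      rw [Finset.mem_range] at hk
      by_cases hpk : p ∣ k
      · obtain ⟨j, rfl⟩ := hpk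
        have hone : (ω ^ (p * j)) ^ ((M / p : ℕ) : ℤ) = 1 := by
          rw [zpow_natCast, ← pow_mul]
          have : p * j * (M / p) = M * j := by
            rw [mul_comm p j, mul_assoc, Nat.mul_div_cancel' hpM]
            ring
          rw [this, pow_mul, hω.pow_eq_one, one_pow]
        rw [neg_add, zpow_add₀ (pow_ne_zero _ hω0), zpow_neg, zpow_neg, hone, inv_one, mul_one]
      · rw [hvan k hk hpk, mul_zero, mul_zero]
    have := (claimA (x + ((M / p : ℕ) : ℤ))).symm.trans (hsum.trans (claimA x))
    have hcast : ((M * cnt (x + ((M / p : ℕ) : ℤ)) : ℕ) : ℂ) = ((M * cnt x : ℕ) : ℂ) := by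
      push_cast
      exact this
    have h5 : M * cnt (x + ((M / p : ℕ) : ℤ)) = M * cnt x := Nat.cast_injective hcast
    exact Nat.eq_of_mul_eq_mul_left hM h5
  -- Claim C
  have claimC : ∀ x : ℤ, x ∈ T ↔ 0 < cnt x := by
    intro x
    constructor
    · intro hx
      apply Finset.card_pos.2
      refine ⟨x % M, Finset.mem_filter.2 ⟨Finset.mem_filter.2 ⟨?_, ?_⟩, ?_⟩⟩
      · exact Finset.mem_Ico.2 ⟨Int.emod_nonneg _ hMz.ne', Int.emod_lt_of_pos _ hMz⟩
      · have h1 : x % M = x + (-(x / M)) * M := by rw [Int.emod_def]; ring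
        rw [h1]
        exact (per_z T M hper _ x).1 hx
      · exact ⟨-(x / M), by rw [Int.emod_def]; ring⟩
    · intro hx
      obtain ⟨t₀, ht₀⟩ := Finset.card_pos.1 hx
      rw [Finset.mem_filter] at ht₀
      obtain ⟨htf, j, hj⟩ := ht₀
      rw [Finset.mem_filter] at htf
      have : x = t₀ + (-j) * M := by linarith [hj]
      rw [this]
      exact (per_z T M hper _ t₀).1 htf.2
  intro t
  rw [claimC t, claimC (t + ((M / p : ℕ) : ℤ)), claimB t]

open Finset Polynomial

lemma prime_pow_le (A : Finset ℤ) (hA : A.Nonempty) (ζ : ℂ) (s : ℕ) (hs : 0 < s)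
    (hprim : IsPrimitiveRoot ζ s) (p a : ℕ) (hp : p.Prime) (ha : 0 < a) (hdvd : p ^ a ∣ s)
    (hvan : ∑ x ∈ A, ζ ^ x = 0) :
    p ^ a ≤ 2 * (A.max' hA - A.min' hA).toNat := by
  have hζ0 : ζ ≠ 0 := by
    intro h
    have := hprim.pow_eq_one
    rw [h, zero_pow hs.ne'] at this
    exact zero_ne_one this
  set m := A.min' hA with hm
  set Q : ℚ[X] := ∑ x ∈ A, X ^ (x - m).toNat with hQ
  have haev : (aeval ζ) Q = 0 := by
    rw [hQ, map_sum]
    have h1 : ∀ x ∈ A, (aeval ζ) ((X : ℚ[X]) ^ (x - m).toNat) = ζ ^ (x : ℤ) * ζ ^ (-m) := by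
      intro x hx
      rw [map_pow, aeval_X]
      rw [← zpow_natCast, Int.toNat_of_nonneg (sub_nonneg.2 (A.min'_le x hx)), sub_eq_add_neg,
        zpow_add₀ hζ0]
    rw [Finset.sum_congr rfl h1, ← Finset.sum_mul, hvan, zero_mul]
  have hQ0 : Q ≠ 0 := by
    intro h
    have hev : Q.eval 1 = (A.card : ℚ) := by
      rw [hQ, eval_finset_sum]
      simp
    rw [h] at hev
    simp only [eval_zero] at hev
    have := hA.card_pos
    rw [eq_comm, Nat.cast_eq_zero] at hev
    omega
  have hdvdQ : minpoly ℚ ζ ∣ Q := minpoly.dvd ℚ ζ haev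
  have hcyc : cyclotomic s ℚ = minpoly ℚ ζ := cyclotomic_eq_minpoly_rat hprim hs
  have hdeg : s.totient ≤ Q.natDegree := by
    rw [← natDegree_cyclotomic s ℚ, hcyc]
    exact Polynomial.natDegree_le_of_dvd hdvdQ hQ0
  have hdegQ : Q.natDegree ≤ (A.max' hA - m).toNat := by
    rw [hQ]
    apply Polynomial.natDegree_sum_le_of_forall_le
    intro x hx
    rw [natDegree_X_pow]
    exact Int.toNat_le_toNat (sub_le_sub_right (A.le_max' x hx) m)
  have htot1 : (p ^ a).totient ≤ s.totient :=
    Nat.le_of_dvd (Nat.totient_pos.2 hs) (Nat.totient_dvd_of_dvd hdvd)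
  have htot2 : (p ^ a).totient = p ^ (a - 1) * (p - 1) := Nat.totient_prime_pow hp ha
  have hpa : p ^ a ≤ 2 * (p ^ a).totient := by
    rw [htot2]
    have h1 : p ^ a = p ^ (a - 1) * p := by
      rw [← pow_succ]
      congr 1
      omega
    rw [h1]
    have h2 : p ≤ 2 * (p - 1) := by have := hp.two_le; omega
    calc p ^ (a - 1) * p ≤ p ^ (a - 1) * (2 * (p - 1)) := Nat.mul_le_mul_left _ h2
      _ = 2 * (p ^ (a - 1) * (p - 1)) := by ring
  calc p ^ a ≤ 2 * (p ^ a).totient := hpa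
    _ ≤ 2 * s.totient := by omega
    _ ≤ 2 * Q.natDegree := by omega
    _ ≤ 2 * (A.max' hA - m).toNat := by omega

open Finset


/-- There is an absolute constant `c > 0` such that whenever a finite set `A ⊆ ℤ` of
diameter `D ≥ 3` tiles `ℤ` by a translation set `T` of least period `M`, where `M` has
the same prime factors as `|A|`, we have `M ≤ exp(c (log D)² / log log D)`. -/
theorem stmt11 : ∃ c : ℝ, 0 < c ∧
    ∀ (A : Finset ℤ) (hA : A.Nonempty) (T : Set ℤ) (M : ℕ),
      3 ≤ A.max' hA - A.min' hA →
      (∀ n : ℤ, ∃! at_ : ℤ × ℤ, at_.1 ∈ A ∧ at_.2 ∈ T ∧ at_.1 + at_.2 = n) →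
      0 < M →
      (∀ t : ℤ, t ∈ T ↔ t + M ∈ T) →
      (∀ P : ℕ, 0 < P → (∀ t : ℤ, t ∈ T ↔ t + P ∈ T) → M ≤ P) →
      M.primeFactors = A.card.primeFactors →
      (M : ℝ) ≤ Real.exp (c * (Real.log (A.max' hA - A.min' hA)) ^ 2 /
        Real.log (Real.log (A.max' hA - A.min' hA))) := by
  classical
  refine ⟨32, by norm_num, ?_⟩
  intro A hA T M hD3 htile hM hper hmin hpf
  rw [show ((A.max' hA : ℝ) - (A.min' hA : ℝ)) = ((A.max' hA - A.min' hA : ℤ) : ℝ) by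
    push_cast; ring]
  set Dz : ℤ := A.max' hA - A.min' hA with hDz
  set Dn : ℕ := Dz.toNat with hDn
  have hDn3 : 3 ≤ Dn := by omega
  set Dr : ℝ := (Dz : ℝ) with hDr
  have hDr3 : (3 : ℝ) ≤ Dr := by rw [hDr]; exact_mod_cast hD3
  have hDr0 : (0 : ℝ) < Dr := by linarith
  set L : ℝ := Real.log Dr with hL
  have hL1 : 1 < L := by
    rw [hL, ← Real.log_exp 1]
    apply Real.log_lt_log (Real.exp_pos 1)
    calc Real.exp 1 < 2.7182818286 := Real.exp_one_lt_d9
      _ < 3 := by norm_num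
      _ ≤ Dr := hDr3
  set ℓ : ℝ := Real.log L with hℓ
  have hℓ0 : 0 < ℓ := Real.log_pos hL1
  -- primitive root
  have hDnz : (Dn : ℤ) = Dz := Int.toNat_of_nonneg (by omega)
  have hDnr : ((Dn : ℕ) : ℝ) = Dr := by rw [hDr, ← hDnz]; push_cast; ring
  set ω : ℂ := Complex.exp (2 * Real.pi * Complex.I / M) with hw
  have hω : IsPrimitiveRoot ω M := Complex.isPrimitiveRoot_exp M hM.ne'
  set Tf := (Finset.Ico (0 : ℤ) (M : ℤ)).filter (· ∈ T) with hTfdef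
  -- prime power bound
  have hppb : ∀ p ∈ M.primeFactors, p ^ M.factorization p ≤ 2 * Dn := by
    intro p hp_mem
    have hp : p.Prime := Nat.prime_of_mem_primeFactors hp_mem
    have hpdvdM : p ∣ M := Nat.dvd_of_mem_primeFactors hp_mem
    set a := M.factorization p with haa
    have ha : 0 < a := hp.factorization_pos_of_dvd hM.ne' hpdvdM
    have hpa : p ^ a ∣ M := Nat.ordProj_dvd M p
    by_cases hcase : ∀ k, k < M → ¬ p ∣ k → ∑ t ∈ Tf, (ω ^ k) ^ t = 0
    · exfalso
      have hshift := shift_period T M p hM hpdvdM hp.one_lt hper ω hω hcase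
      have hpos : 0 < M / p := Nat.div_pos (Nat.le_of_dvd hM hpdvdM) hp.pos
      have h1 := hmin (M / p) hpos hshift
      have h2 := Nat.div_lt_self hM hp.one_lt
      omega
    · push_neg at hcase
      obtain ⟨k, hkM, hpk, hST⟩ := hcase
      have hk0 : 0 < k := by
        rcases Nat.eq_zero_or_pos k with rfl | h
        · exact absurd (dvd_zero p) hpk
        · exact h
      have hζ1 : ω ^ k ≠ 1 := hω.pow_ne_one_of_pos_of_lt hk0.ne' hkM
      have hζM : (ω ^ k) ^ M = 1 := by
        rw [← pow_mul, mul_comm, pow_mul, hω.pow_eq_one, one_pow]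
      have hzero := tiling_prod_eq_zero A T M hM htile hper (ω ^ k) hζM hζ1
      have hSA : ∑ x ∈ A, (ω ^ k) ^ x = 0 := by
        rcases mul_eq_zero.1 hzero with h | h
        · exact h
        · exact absurd h hST
      set g := Nat.gcd M k with hg
      have hg0 : 0 < g := Nat.gcd_pos_of_pos_left k hM
      have hgM : g ∣ M := Nat.gcd_dvd_left M k
      have hgk : g ∣ k := Nat.gcd_dvd_right M k
      have hprim1 : IsPrimitiveRoot (ω ^ g) (M / g) := hω.pow_of_dvd hg0.ne' hgM
      have hcop : Nat.Coprime (k / g) (M / g) := (Nat.coprime_div_gcd_div_gcd hg0).symm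
      have hprim2 : IsPrimitiveRoot ((ω ^ g) ^ (k / g)) (M / g) := hprim1.pow_of_coprime _ hcop
      have hkg : g * (k / g) = k := Nat.mul_div_cancel' hgk
      have hprim : IsPrimitiveRoot (ω ^ k) (M / g) := by
        rw [← hkg, pow_mul]
        exact hprim2
      have hs0 : 0 < M / g := Nat.div_pos (Nat.le_of_dvd hM hgM) hg0
      have hpg : ¬ p ∣ g := fun h => hpk (h.trans hgk)
      have hcop2 : Nat.Coprime (p ^ a) g :=
        Nat.Coprime.pow_left a ((Nat.Prime.coprime_iff_not_dvd hp).2 hpg)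
      have hpas : p ^ a ∣ M / g := by
        have hMg : g * (M / g) = M := Nat.mul_div_cancel' hgM
        have h4 : p ^ a ∣ g * (M / g) := by rw [hMg]; exact hpa
        exact hcop2.dvd_of_dvd_mul_left h4
      exact prime_pow_le A hA (ω ^ k) (M / g) hs0 hprim p a hp ha hpas hSA
  -- M as product of prime powers
  set d := M.primeFactors.card with hd
  have hMprod : (M : ℝ) = ∏ p ∈ M.primeFactors, ((p ^ M.factorization p : ℕ) : ℝ) := by
    rw [← Nat.cast_prod]
    congr 1
    conv_lhs => rw [← Nat.factorization_prod_pow_eq_self hM.ne']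
    rw [Nat.prod_factorization_eq_prod_primeFactors]
  have hMle : (M : ℝ) ≤ (2 * Dr) ^ d := by
    rw [hMprod, hd, ← Finset.prod_const]
    apply Finset.prod_le_prod
    · intro p _; positivity
    · intro p hp
      have h1 := hppb p hp
      have h2 : ((p ^ M.factorization p : ℕ) : ℝ) ≤ ((2 * Dn : ℕ) : ℝ) := by exact_mod_cast h1
      have h3 : ((2 * Dn : ℕ) : ℝ) = 2 * Dr := by push_cast at hDnr ⊢; rw [hDnr]
      linarith
  -- card bound
  have hcard_le : A.card ≤ Dn + 1 := by
    have hsub : A ⊆ Finset.Icc (A.min' hA) (A.max' hA) :=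
      fun x hx => Finset.mem_Icc.2 ⟨A.min'_le x hx, A.le_max' x hx⟩
    have h1 := Finset.card_le_card hsub
    rw [Int.card_Icc] at h1
    omega
  have hfacle : d.factorial ≤ Dn + 1 := by
    have h1 : d.factorial ≤ ∏ p ∈ M.primeFactors, p :=
      fact_le_prod M.primeFactors (fun q hq => (Nat.prime_of_mem_primeFactors hq).two_le)
    have h2 : ∏ p ∈ M.primeFactors, p ∣ A.card := by
      rw [hpf]
      exact Nat.prod_primeFactors_dvd A.card
    have h3 : ∏ p ∈ M.primeFactors, p ≤ A.card :=
      Nat.le_of_dvd hA.card_pos h2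
    omega
  -- real factorial bound
  have hfacr : (d.factorial : ℝ) ≤ Real.exp (2 * L) := by
    have h1 : (d.factorial : ℝ) ≤ (Dn : ℝ) + 1 := by exact_mod_cast hfacle
    have h2 : (Dn : ℝ) = Dr := hDnr
    have h3 : Real.exp (2 * L) = Dr ^ 2 := by
      rw [hL, two_mul, Real.exp_add, Real.exp_log hDr0, sq]
    rw [h3]
    nlinarith
  have hkey := key_real d L hL1 hfacr
  -- combine
  have hfinal : (d : ℝ) * Real.log (2 * Dr) ≤ 32 * L ^ 2 / ℓ := by
    have h1 : Real.log (2 * Dr) ≤ 2 * L := by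
      rw [Real.log_mul (by norm_num) hDr0.ne']
      have h2 : Real.log 2 < 1 := by
        rw [← Real.log_exp 1]
        apply Real.log_lt_log (by norm_num)
        have := Real.exp_one_gt_d9
        calc (2:ℝ) < 2.7182818283 := by norm_num
          _ < Real.exp 1 := Real.exp_one_gt_d9
      rw [hL]
      linarith
    have hd0 : (0:ℝ) ≤ d := Nat.cast_nonneg d
    have hL0 : (0:ℝ) < L := by linarith
    have h4 : (d:ℝ) * Real.log (2 * Dr) ≤ (d:ℝ) * (2 * L) :=
      mul_le_mul_of_nonneg_left h1 hd0
    have h5 : (d:ℝ) * (2 * L) ≤ 32 * L ^ 2 / ℓ := by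
      rw [le_div_iff₀ hℓ0]
      nlinarith [mul_le_mul_of_nonneg_right hkey (by linarith : (0:ℝ) ≤ 2 * L)]
    exact h4.trans h5
  calc (M : ℝ) ≤ (2 * Dr) ^ d := hMle
    _ = Real.exp ((d : ℝ) * Real.log (2 * Dr)) := by
        rw [Real.exp_nat_mul, Real.exp_log (by linarith)]
    _ ≤ Real.exp (32 * L ^ 2 / ℓ) := Real.exp_le_exp.2 hfinal
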